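/- arXiv:2512.21434 — 2 statements merged into one kernel-verified Lean document; each statement's English description precedes it below -/
import Mathlib

section
/- Let X ∈ ℝ^{D×n} with r = rank(X), let β₁, …, β_r > 0 be the strictly positive eigenvalues of XᵀX, let P ∈ ℝ^{n×r} be a matrix whose columns are corresponding orthonormal eigenvectors of XᵀX, and for λ ∈ [0,1] let C*(λ) = (XᵀX + λI_n)⁻¹(XᵀX). If λ is a random variable uniformly distributed on [0,1], then for every δ > 0 the probability that ‖C*(λ) − PPᵀ‖_F² ≥ δ is at most (1/δ)·Σ_{i=1}^r g(β_i), where g(β) = (2β+1)/(β+1) + 2β·ln(β/(β+1)). Equivalently, the Lebesgue measure of the set {λ ∈ (0,1] : ‖C*(λ) − PPᵀ‖_F² ≥ δ} is at most (1/δ)·Σ_{i=1}^r g(β_i). -/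
open Matrix MeasureTheory

/-- Squared Frobenius norm of a real matrix. -/
def frobSq {I J : Type*} [Fintype I] [Fintype J] (A : Matrix I J ℝ) : ℝ :=
  ∑ i, ∑ j, (A i j) ^ 2

section Helpers

variable {Dd n r : ℕ}

lemma gram_eq (X : Matrix (Fin Dd) (Fin n) ℝ) (hr : r = X.rank)
    (β : Fin r → ℝ) (hβ : ∀ i, 0 < β i)
    (P : Matrix (Fin n) (Fin r) ℝ) (hP : Pᵀ * P = 1)
    (heig : (Xᵀ * X) * P = P * Matrix.diagonal β) :
    Xᵀ * X = P * Matrix.diagonal β * Pᵀ := by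
  set M := Xᵀ * X with hM
  clear_value M
  have hMsymm : Mᵀ = M := by rw [hM, Matrix.transpose_mul, Matrix.transpose_transpose]
  have hPM : Pᵀ * M = Matrix.diagonal β * Pᵀ := by
    have h := congrArg Matrix.transpose heig
    rw [Matrix.transpose_mul, Matrix.transpose_mul, Matrix.diagonal_transpose, hMsymm] at h
    exact h
  -- kernel property
  have hker : ∀ v, M *ᵥ v = 0 → Pᵀ *ᵥ v = 0 := by
    intro v hv
    have h1 : Matrix.diagonal β *ᵥ (Pᵀ *ᵥ v) = 0 := by
      rw [Matrix.mulVec_mulVec, ← hPM, ← Matrix.mulVec_mulVec, hv, Matrix.mulVec_zero]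
    funext i
    have h2 := congrFun h1 i
    rw [Matrix.mulVec_diagonal] at h2
    have := (mul_eq_zero.mp h2).resolve_left (hβ i).ne'
    simpa using this
  -- injectivity of P
  have hPinj : Function.Injective P.mulVecLin := by
    intro a b hab
    have := congrArg (fun v => Pᵀ *ᵥ v) hab
    simp only [Matrix.mulVecLin_apply, Matrix.mulVec_mulVec, hP, Matrix.one_mulVec] at this
    exact this
  have hrange : Module.finrank ℝ (LinearMap.range P.mulVecLin) = r := by
    rw [LinearMap.finrank_range_of_inj hPinj]; simp
  have hrankM : Module.finrank ℝ (LinearMap.range M.mulVecLin) = r := by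
    have h := Matrix.rank_transpose_mul_self X
    rw [Matrix.rank] at h
    rw [hM]
    omega
  have hinf : LinearMap.ker M.mulVecLin ⊓ LinearMap.range P.mulVecLin = ⊥ := by
    rw [Submodule.eq_bot_iff]
    rintro v ⟨hv1, w, rfl⟩
    simp only [Matrix.mulVecLin_apply, LinearMap.mem_ker] at hv1 ⊢
    have h0 : Pᵀ *ᵥ (P *ᵥ w) = 0 := hker _ hv1
    rw [Matrix.mulVec_mulVec, hP, Matrix.one_mulVec] at h0
    rw [h0, Matrix.mulVec_zero]
  have hsup : LinearMap.ker M.mulVecLin ⊔ LinearMap.range P.mulVecLin = ⊤ := by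
    apply Submodule.eq_top_of_finrank_eq
    have h1 := Submodule.finrank_sup_add_finrank_inf_eq (LinearMap.ker M.mulVecLin)
      (LinearMap.range P.mulVecLin)
    have h2 := LinearMap.finrank_range_add_finrank_ker M.mulVecLin
    rw [hinf] at h1
    simp only [finrank_bot, add_zero] at h1
    have h3 : Module.finrank ℝ (Fin n → ℝ) = n := by simp
    rw [h3] at h2 ⊢
    omega
  -- now show N := M - P*diag*Pᵀ kills everything
  have hN : ∀ v, (M - P * Matrix.diagonal β * Pᵀ) *ᵥ v = 0 := by
    intro v
    have hv : v ∈ LinearMap.ker M.mulVecLin ⊔ LinearMap.range P.mulVecLin := by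
      rw [hsup]; trivial
    obtain ⟨a, ha, b, hb, rfl⟩ := Submodule.mem_sup.mp hv
    obtain ⟨w, rfl⟩ := hb
    simp only [LinearMap.mem_ker, Matrix.mulVecLin_apply] at ha
    simp only [Matrix.mulVecLin_apply]
    rw [Matrix.mulVec_add, Matrix.sub_mulVec, Matrix.sub_mulVec]
    have e1 : M *ᵥ a = 0 := ha
    have e2 : (P * Matrix.diagonal β * Pᵀ) *ᵥ a = 0 := by
      rw [← Matrix.mulVec_mulVec, hker a ha, Matrix.mulVec_zero]
    have e3 : M *ᵥ (P *ᵥ w) = (P * Matrix.diagonal β) *ᵥ w := by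
      rw [Matrix.mulVec_mulVec, heig]
    have e4 : (P * Matrix.diagonal β * Pᵀ) *ᵥ (P *ᵥ w) = (P * Matrix.diagonal β) *ᵥ w := by
      rw [Matrix.mulVec_mulVec, Matrix.mul_assoc (P * Matrix.diagonal β), hP, Matrix.mul_one]
    rw [e1, e2, e3, e4]
    simp
  -- conclude equality
  have : M - P * Matrix.diagonal β * Pᵀ = 0 := by
    ext i j
    have h := congrFun (hN (Pi.single j 1)) i
    rw [Matrix.mulVec_single] at h
    simpa using h
  have := sub_eq_zero.mp this
  exact this

lemma pconj_mul (P : Matrix (Fin n) (Fin r) ℝ) (hP : Pᵀ * P = 1) (a b : Fin r → ℝ) :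
    (P * Matrix.diagonal a * Pᵀ) * (P * Matrix.diagonal b * Pᵀ)
      = P * Matrix.diagonal (fun i => a i * b i) * Pᵀ := by
  have : Matrix.diagonal a * (Pᵀ * P) * Matrix.diagonal b = Matrix.diagonal (fun i => a i * b i) := by
    rw [hP, Matrix.mul_one, Matrix.diagonal_mul_diagonal]
  calc (P * Matrix.diagonal a * Pᵀ) * (P * Matrix.diagonal b * Pᵀ)
      = P * (Matrix.diagonal a * (Pᵀ * P) * Matrix.diagonal b) * Pᵀ := by
        simp only [Matrix.mul_assoc]
    _ = P * Matrix.diagonal (fun i => a i * b i) * Pᵀ := by rw [this]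

lemma pconj_inv (P : Matrix (Fin n) (Fin r) ℝ) (hP : Pᵀ * P = 1) (β : Fin r → ℝ)
    (lam : ℝ) (hlam : 0 < lam) (hβ : ∀ i, 0 < β i) :
    (P * Matrix.diagonal β * Pᵀ + lam • (1 : Matrix (Fin n) (Fin n) ℝ))⁻¹
      = lam⁻¹ • (1 - P * Pᵀ) + P * Matrix.diagonal (fun i => (β i + lam)⁻¹) * Pᵀ := by
  apply Matrix.inv_eq_right_inv
  have hPP : P * Pᵀ = P * Matrix.diagonal (fun _ : Fin r => (1:ℝ)) * Pᵀ := by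
    rw [Matrix.diagonal_one, Matrix.mul_one]
  have h1 : (P * Matrix.diagonal β * Pᵀ) * (lam⁻¹ • (1 - P * Pᵀ)) = 0 := by
    rw [Matrix.mul_smul, Matrix.mul_sub, Matrix.mul_one, hPP, pconj_mul P hP]
    simp
  have h2 : (P * Matrix.diagonal β * Pᵀ) * (P * Matrix.diagonal (fun i => (β i + lam)⁻¹) * Pᵀ)
      = P * Matrix.diagonal (fun i => β i * (β i + lam)⁻¹) * Pᵀ := pconj_mul P hP _ _
  have h3 : (lam • (1 : Matrix (Fin n) (Fin n) ℝ)) * (lam⁻¹ • (1 - P * Pᵀ)) = 1 - P * Pᵀ := by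
    rw [Matrix.smul_mul, Matrix.one_mul, smul_smul, mul_inv_cancel₀ hlam.ne', one_smul]
  have h4 : (lam • (1 : Matrix (Fin n) (Fin n) ℝ)) * (P * Matrix.diagonal (fun i => (β i + lam)⁻¹) * Pᵀ)
      = P * Matrix.diagonal (fun i => lam * (β i + lam)⁻¹) * Pᵀ := by
    rw [Matrix.smul_mul, Matrix.one_mul, ← Matrix.smul_mul, ← Matrix.mul_smul,
      ← Matrix.diagonal_smul]
    rfl
  rw [add_mul, mul_add, mul_add, h1, h2, h3, h4, zero_add]
  have h5 : P * Matrix.diagonal (fun i => β i * (β i + lam)⁻¹) * Pᵀ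
      + P * Matrix.diagonal (fun i => lam * (β i + lam)⁻¹) * Pᵀ = P * Pᵀ := by
    rw [← Matrix.add_mul, ← Matrix.mul_add, Matrix.diagonal_add, hPP]
    have hfun : (fun i => β i * (β i + lam)⁻¹ + lam * (β i + lam)⁻¹) = fun _ : Fin r => (1:ℝ) := by
      funext i
      have hne : β i + lam ≠ 0 := (add_pos (hβ i) hlam).ne'
      field_simp
    rw [hfun]
  rw [add_comm (1 - P * Pᵀ), ← add_assoc, h5]
  simp

lemma frobSq_pconj (P : Matrix (Fin n) (Fin r) ℝ) (hP : Pᵀ * P = 1) (g : Fin r → ℝ) :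
    frobSq (P * Matrix.diagonal g * Pᵀ) = ∑ i, g i ^ 2 := by
  have ht : ∀ A : Matrix (Fin n) (Fin n) ℝ, frobSq A = (Aᵀ * A).trace := by
    intro A
    simp only [frobSq, Matrix.trace, Matrix.diag, Matrix.mul_apply, Matrix.transpose_apply,
      pow_two]
    exact Finset.sum_comm
  rw [ht]
  have hsym : (P * Matrix.diagonal g * Pᵀ)ᵀ = P * Matrix.diagonal g * Pᵀ := by
    simp [Matrix.transpose_mul, Matrix.mul_assoc]
  rw [hsym, pconj_mul P hP]
  rw [Matrix.mul_assoc, Matrix.trace_mul_comm, Matrix.mul_assoc, hP, Matrix.mul_one]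
  simp [Matrix.trace, pow_two]

lemma integ_g (b : ℝ) (hb : 0 < b) :
    ∫ l in (0:ℝ)..1, (l * (b + l)⁻¹) ^ 2
      = (2 * b + 1) / (b + 1) + 2 * b * Real.log (b / (b + 1)) := by
  have hne : ∀ l ∈ Set.uIcc (0:ℝ) 1, b + l ≠ 0 := by
    intro l hl
    rw [Set.uIcc_of_le zero_le_one] at hl
    have := hl.1
    positivity
  have hderiv : ∀ l ∈ Set.uIcc (0:ℝ) 1,
      HasDerivAt (fun t => t - 2 * b * Real.log (b + t) - b ^ 2 * (b + t)⁻¹)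
        ((l * (b + l)⁻¹) ^ 2) l := by
    intro l hl
    have hbl : b + l ≠ 0 := hne l hl
    have h1 : HasDerivAt (fun t : ℝ => b + t) 1 l := (hasDerivAt_id l).const_add b
    have h2 : HasDerivAt (fun t : ℝ => Real.log (b + t)) (1 / (b + l)) l := by
      simpa using h1.log hbl
    have h3 : HasDerivAt (fun t : ℝ => (b + t)⁻¹) (-1 / (b + l) ^ 2) l := by
      simpa using h1.fun_inv hbl
    have h := ((hasDerivAt_id' l).fun_sub ((h2.const_mul (2*b)))).fun_sub (h3.const_mul (b^2))
    refine h.congr_deriv ?_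
    field_simp
    ring
  have hcont : IntervalIntegrable (fun l : ℝ => (l * (b + l)⁻¹) ^ 2) MeasureTheory.volume 0 1 := by
    apply ContinuousOn.intervalIntegrable
    apply ContinuousOn.pow
    exact continuousOn_id.mul ((continuous_const.add continuous_id).continuousOn.inv₀ hne)
  rw [intervalIntegral.integral_eq_sub_of_hasDerivAt hderiv hcont]
  have hb1 : b + 1 ≠ 0 := by positivity
  rw [Real.log_div hb.ne' hb1]
  simp only [add_zero]
  field_simp
  ring

end Helpers

/-- Let `r = rank X`, `β₁,…,β_r > 0` the strictly positive eigenvalues of `XᵀX`, and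
`P ∈ ℝ^{n×r}` a matrix of corresponding orthonormal eigenvectors. For `λ` uniformly
distributed on `[0,1]` and `C*(λ) = (XᵀX + λI)⁻¹(XᵀX)`, the probability that
`‖C*(λ) − PPᵀ‖_F² ≥ δ` is at most `(1/δ)·Σᵢ g(βᵢ)` with
`g(β) = (2β+1)/(β+1) + 2β·ln(β/(β+1))`; equivalently, the Lebesgue measure of
`{λ ∈ (0,1] : ‖C*(λ) − PPᵀ‖_F² ≥ δ}` is at most this bound. -/
theorem tail_bound_lowrank_approx
    (D n : ℕ) (X : Matrix (Fin D) (Fin n) ℝ)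
    (r : ℕ) (hr : r = X.rank)
    (β : Fin r → ℝ) (hβ : ∀ i, 0 < β i)
    (P : Matrix (Fin n) (Fin r) ℝ) (hP : Pᵀ * P = 1)
    (heig : (Xᵀ * X) * P = P * Matrix.diagonal β)
    (δ : ℝ) (hδ : 0 < δ) :
    volume {lam : ℝ | lam ∈ Set.Ioc (0 : ℝ) 1 ∧
        δ ≤ frobSq ((Xᵀ * X + lam • (1 : Matrix (Fin n) (Fin n) ℝ))⁻¹ * (Xᵀ * X) - P * Pᵀ)} ≤
      ENNReal.ofReal ((1 / δ) *
        ∑ i, ((2 * β i + 1) / (β i + 1) + 2 * β i * Real.log (β i / (β i + 1)))) := by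
  have hM : Xᵀ * X = P * Matrix.diagonal β * Pᵀ := gram_eq X hr β hβ P hP heig
  set G : ℝ → ℝ := fun lam => ∑ i, (lam * (β i + lam)⁻¹) ^ 2 with hGdef
  set S : Set ℝ := {lam : ℝ | lam ∈ Set.Ioc (0 : ℝ) 1 ∧
      δ ≤ frobSq ((Xᵀ * X + lam • (1 : Matrix (Fin n) (Fin n) ℝ))⁻¹ * (Xᵀ * X) - P * Pᵀ)}
    with hSdef
  have hPP : P * Pᵀ = P * Matrix.diagonal (fun _ : Fin r => (1:ℝ)) * Pᵀ := by
    rw [Matrix.diagonal_one, Matrix.mul_one]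
  -- key pointwise identity
  have key : ∀ lam ∈ Set.Ioc (0:ℝ) 1,
      frobSq ((Xᵀ * X + lam • (1 : Matrix (Fin n) (Fin n) ℝ))⁻¹ * (Xᵀ * X) - P * Pᵀ)
        = G lam := by
    intro lam hlam
    have hlam0 : 0 < lam := hlam.1
    have hinv := pconj_inv P hP β lam hlam0 hβ
    have hdiff : (Xᵀ * X + lam • (1 : Matrix (Fin n) (Fin n) ℝ))⁻¹ * (Xᵀ * X) - P * Pᵀ
        = P * Matrix.diagonal (fun i => (β i + lam)⁻¹ * β i - 1) * Pᵀ := by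
      rw [hM, hinv, add_mul]
      have t1 : (lam⁻¹ • ((1 : Matrix (Fin n) (Fin n) ℝ) - P * Pᵀ))
          * (P * Matrix.diagonal β * Pᵀ) = 0 := by
        rw [Matrix.smul_mul, Matrix.sub_mul, Matrix.one_mul, hPP, pconj_mul P hP]
        simp
      have t2 : (P * Matrix.diagonal (fun i => (β i + lam)⁻¹) * Pᵀ)
          * (P * Matrix.diagonal β * Pᵀ)
          = P * Matrix.diagonal (fun i => (β i + lam)⁻¹ * β i) * Pᵀ := pconj_mul P hP _ _
      rw [t1, t2, zero_add, hPP, ← Matrix.sub_mul, ← Matrix.mul_sub, Matrix.diagonal_sub]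
    rw [hdiff, frobSq_pconj P hP]
    apply Finset.sum_congr rfl
    intro i _
    have hne : β i + lam ≠ 0 := (add_pos (hβ i) hlam0).ne'
    have : (β i + lam)⁻¹ * β i - 1 = -(lam * (β i + lam)⁻¹) := by
      field_simp
      ring
    rw [this, neg_pow]
    simp
  -- measurability of G
  have hGm : Measurable G := by
    apply Finset.measurable_sum
    intro i _
    exact ((measurable_id.mul ((measurable_const.add measurable_id).inv)).pow_const 2)
  -- Markov step
  have markov : ENNReal.ofReal δ * volume S ≤ ∫⁻ lam in S, ENNReal.ofReal (G lam) := by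
    have e1 : ENNReal.ofReal δ * volume S = ∫⁻ _ in S, ENNReal.ofReal δ := by
      rw [setLIntegral_const]
    rw [e1]
    apply setLIntegral_mono (hGm.ennreal_ofReal)
    intro x hx
    exact ENNReal.ofReal_le_ofReal ((key x hx.1) ▸ hx.2)
  have le2 : ∫⁻ lam in S, ENNReal.ofReal (G lam)
      ≤ ∫⁻ lam in Set.Ioc (0:ℝ) 1, ENNReal.ofReal (G lam) :=
    lintegral_mono_set (fun x hx => hx.1)
  -- continuity / integrability on [0,1]
  have hcontOn : ∀ i : Fin r, ContinuousOn (fun lam : ℝ => (lam * (β i + lam)⁻¹) ^ 2)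
      (Set.uIcc (0:ℝ) 1) := by
    intro i
    have hne : ∀ l ∈ Set.uIcc (0:ℝ) 1, β i + l ≠ 0 := by
      intro l hl
      rw [Set.uIcc_of_le zero_le_one] at hl
      have h0 := hl.1
      have := hβ i
      positivity
    exact (continuousOn_id.mul
      ((continuous_const.add continuous_id).continuousOn.inv₀ hne)).pow 2
  have hGint : IntegrableOn G (Set.Ioc (0:ℝ) 1) := by
    have : IntegrableOn G (Set.Icc (0:ℝ) 1) := by
      apply ContinuousOn.integrableOn_Icc
      apply continuousOn_finset_sum
      intro i _
      have := hcontOn i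
      rwa [Set.uIcc_of_le zero_le_one] at this
    exact this.mono_set Set.Ioc_subset_Icc_self
  have eq3 : ∫⁻ lam in Set.Ioc (0:ℝ) 1, ENNReal.ofReal (G lam)
      = ENNReal.ofReal (∫ lam in Set.Ioc (0:ℝ) 1, G lam) := by
    rw [← ofReal_integral_eq_lintegral_ofReal hGint]
    exact Filter.Eventually.of_forall fun x => Finset.sum_nonneg fun i _ => sq_nonneg _
  have eq4 : ∫ lam in Set.Ioc (0:ℝ) 1, G lam
      = ∑ i, ((2 * β i + 1) / (β i + 1) + 2 * β i * Real.log (β i / (β i + 1))) := by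
    rw [← intervalIntegral.integral_of_le zero_le_one]
    rw [hGdef]
    rw [intervalIntegral.integral_finset_sum
      (fun i _ => (hcontOn i).intervalIntegrable)]
    exact Finset.sum_congr rfl fun i _ => integ_g (β i) (hβ i)
  -- combine
  have combined : ENNReal.ofReal δ * volume S ≤ ENNReal.ofReal
      (∑ i, ((2 * β i + 1) / (β i + 1) + 2 * β i * Real.log (β i / (β i + 1)))) := by
    calc ENNReal.ofReal δ * volume S ≤ ∫⁻ lam in S, ENNReal.ofReal (G lam) := markov
      _ ≤ ∫⁻ lam in Set.Ioc (0:ℝ) 1, ENNReal.ofReal (G lam) := le2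
      _ = _ := by rw [eq3, eq4]
  have hδ0 : ENNReal.ofReal δ ≠ 0 := by
    simp [ENNReal.ofReal_eq_zero, not_le, hδ]
  have final : volume S ≤ ENNReal.ofReal
      (∑ i, ((2 * β i + 1) / (β i + 1) + 2 * β i * Real.log (β i / (β i + 1))))
      / ENNReal.ofReal δ := by
    rw [ENNReal.le_div_iff_mul_le (Or.inl hδ0) (Or.inl ENNReal.ofReal_ne_top)]
    rw [mul_comm]
    exact combined
  have : ENNReal.ofReal ((1 / δ) *
      ∑ i, ((2 * β i + 1) / (β i + 1) + 2 * β i * Real.log (β i / (β i + 1))))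
      = ENNReal.ofReal
      (∑ i, ((2 * β i + 1) / (β i + 1) + 2 * β i * Real.log (β i / (β i + 1))))
      / ENNReal.ofReal δ := by
    rw [one_div, inv_mul_eq_div, ENNReal.ofReal_div_of_pos hδ]
  rw [this]
  exact final
end

section
/- Let Z ∈ ℝ^{d×n} and let M ∈ ℝ^{n×m} with m ≤ min(d, n). For every P ∈ ℝ^{n×m} with PᵀP = I_m, tr(PᵀM) ≤ Σ_{i=1}^m σ_i(M), where σ₁(M) ≥ ⋯ ≥ σ_m(M) are the m largest singular values of M. -/
open Matrix

/-- Trace–singular value inequality: if `M ∈ ℝ^{n×m}` (`m ≤ min(d,n)`) has a thin SVD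
`M = U·diag(σ)·Vᵀ` (`UᵀU = I_m`, `V` orthogonal `m×m`, `σ ≥ 0`, so the `σᵢ` are the
singular values of `M`), then for every `P ∈ ℝ^{n×m}` with `PᵀP = I_m`,
`tr(PᵀM) ≤ Σ_{i=1}^m σᵢ`. -/
theorem trace_le_sum_singular_values
    (d n m : ℕ) (hmd : m ≤ d) (hmn : m ≤ n)
    (Z : Matrix (Fin d) (Fin n) ℝ)
    (M : Matrix (Fin n) (Fin m) ℝ)
    (U : Matrix (Fin n) (Fin m) ℝ) (V : Matrix (Fin m) (Fin m) ℝ) (σ : Fin m → ℝ)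
    (hU : Uᵀ * U = 1) (hV₁ : Vᵀ * V = 1) (hV₂ : V * Vᵀ = 1) (hσ : ∀ i, 0 ≤ σ i)
    (hSVD : M = U * Matrix.diagonal σ * Vᵀ) :
    ∀ P : Matrix (Fin n) (Fin m) ℝ, Pᵀ * P = 1 →
      Matrix.trace (Pᵀ * M) ≤ ∑ i, σ i := by
  intro P hP
  set A : Matrix (Fin n) (Fin m) ℝ := P * V with hA
  have hAorth : Aᵀ * A = 1 := by
    rw [hA, transpose_mul, Matrix.mul_assoc, ← Matrix.mul_assoc Pᵀ P V, hP,
      Matrix.one_mul, hV₁]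
  -- trace(Pᵀ M) = trace(Vᵀ Pᵀ U diag σ) = ∑ i, (Aᵀ U) i i * σ i
  have htr : Matrix.trace (Pᵀ * M) = ∑ i, (Aᵀ * U) i i * σ i := by
    rw [hSVD, ← Matrix.mul_assoc, ← Matrix.mul_assoc, Matrix.trace_mul_comm]
    rw [show Vᵀ * (Pᵀ * U * Matrix.diagonal σ) = (Aᵀ * U) * Matrix.diagonal σ by
      rw [hA, transpose_mul]; simp only [Matrix.mul_assoc]]
    rw [Matrix.trace]
    simp [Matrix.diag, Matrix.mul_diagonal]
  rw [htr]
  apply Finset.sum_le_sum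
  intro i _
  have hdiag : (Aᵀ * U) i i ≤ 1 := by
    have hcs := Finset.sum_mul_sq_le_sq_mul_sq Finset.univ (fun k => A k i) (fun k => U k i)
    have hAi : ∑ k, A k i ^ 2 = 1 := by
      have := congrArg (fun B => B i i) hAorth
      simpa [Matrix.mul_apply, sq] using this
    have hUi : ∑ k, U k i ^ 2 = 1 := by
      have := congrArg (fun B => B i i) hU
      simpa [Matrix.mul_apply, sq] using this
    rw [hAi, hUi, mul_one] at hcs
    have hval : (Aᵀ * U) i i = ∑ k, A k i * U k i := by
      simp [Matrix.mul_apply, Matrix.transpose_apply]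
    rw [hval]
    nlinarith [hcs]
  nlinarith [hσ i, hdiag]
end
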